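/- Let λ be a real number and let u : ℝ² → ℝ be continuous on the closed square [0,π] × [0,π], twice continuously differentiable on the open square (0,π) × (0,π), with u(x,y) > 0 for all (x,y) ∈ (0,π) × (0,π), u = 0 on the boundary of [0,π] × [0,π], and Δu = −λ·u on (0,π) × (0,π). Then λ = 2. -/

import Mathlib

open Real Set Filter Topology

/-- First coordinate partial derivative of a function on `ℝ²`. -/
noncomputable def pdX (f : ℝ × ℝ → ℝ) (p : ℝ × ℝ) : ℝ := deriv (fun t => f (t, p.2)) p.1

/-- Second coordinate partial derivative of a function on `ℝ²`. -/
noncomputable def pdY (f : ℝ × ℝ → ℝ) (p : ℝ × ℝ) : ℝ := deriv (fun t => f (p.1, t)) p.2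

/-- Euclidean Laplacian on `ℝ²` via coordinate partial derivatives. -/
noncomputable def lap (f : ℝ × ℝ → ℝ) (p : ℝ × ℝ) : ℝ := pdX (pdX f) p + pdY (pdY f) p


lemma deriv2_nonneg_of_isLocalMin {f : ℝ → ℝ} {x₀ : ℝ}
    (hf : ∀ᶠ t in 𝓝 x₀, DifferentiableAt ℝ f t)
    (hf' : DifferentiableAt ℝ (deriv f) x₀)
    (hmin : IsLocalMin f x₀) : 0 ≤ deriv (deriv f) x₀ := by
  by_contra hneg
  push_neg at hneg
  set g := deriv f with hg
  have hg0 : g x₀ = 0 := hmin.deriv_eq_zero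
  have hslope : Tendsto (slope g x₀) (𝓝[≠] x₀) (𝓝 (deriv g x₀)) :=
    hasDerivAt_iff_tendsto_slope.mp hf'.hasDerivAt
  have hev : ∀ᶠ t in 𝓝[>] x₀, g t < 0 := by
    have h1 : ∀ᶠ t in 𝓝[≠] x₀, slope g x₀ t < 0 :=
      hslope.eventually_lt_const hneg
    have h2 : ∀ᶠ t in 𝓝[>] x₀, slope g x₀ t < 0 :=
      h1.filter_mono (nhdsWithin_mono x₀ (fun t ht => ne_of_gt ht))
    filter_upwards [h2, self_mem_nhdsWithin] with t ht ht'
    have hd : (0:ℝ) < t - x₀ := sub_pos.mpr ht'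
    rw [slope_def_field, div_neg_iff] at ht
    rcases ht with ⟨h1', h2'⟩ | ⟨h1', h2'⟩ <;> linarith
  have hall : ∀ᶠ t in 𝓝[>] x₀, g t < 0 ∧ DifferentiableAt ℝ f t ∧ f x₀ ≤ f t := by
    have := (hf.and hmin).filter_mono (nhdsWithin_le_nhds (s := Ioi x₀))
    filter_upwards [hev, this] with t h1 h2 using ⟨h1, h2.1, h2.2⟩
  rcases (mem_nhdsGT_iff_exists_Ioc_subset).mp hall with ⟨b, hb, hsub⟩
  have hb' : x₀ < b := hb
  have hdiff : ∀ t ∈ Ioc x₀ b, DifferentiableAt ℝ f t := fun t ht => (hsub ht).2.1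
  have hcont : ContinuousOn f (Icc x₀ b) := by
    intro t ht
    have hd : DifferentiableAt ℝ f t := by
      rcases eq_or_lt_of_le ht.1 with h | h
      · exact h ▸ hf.self_of_nhds
      · exact hdiff t ⟨h, ht.2⟩
    exact hd.continuousAt.continuousWithinAt
  obtain ⟨c, hc, hceq⟩ := exists_deriv_eq_slope f hb' hcont
    (fun t ht => (hdiff t ⟨ht.1, le_of_lt ht.2⟩).differentiableWithinAt)
  have hgc : g c < 0 := (hsub ⟨hc.1, le_of_lt hc.2⟩).1
  have hfb : f x₀ ≤ f b := (hsub ⟨hb', le_refl b⟩).2.2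
  rw [hg, hceq] at hgc
  have : (0:ℝ) < b - x₀ := sub_pos.mpr hb'
  rw [div_neg_iff] at hgc
  rcases hgc with ⟨h1, h2⟩ | ⟨h1, h2⟩ <;> linarith

lemma slice_reg {u : ℝ × ℝ → ℝ} {S : Set (ℝ × ℝ)} (hS : IsOpen S)
    (hreg : ContDiffOn ℝ 2 u S) {x₀ y₀ : ℝ} (hp : (x₀, y₀) ∈ S) :
    (∀ᶠ t in 𝓝 x₀, DifferentiableAt ℝ (fun t => u (t, y₀)) t) ∧
      DifferentiableAt ℝ (deriv (fun t => u (t, y₀))) x₀ := by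
  set f : ℝ → ℝ := fun t => u (t, y₀) with hfdef
  have hg : ContDiff ℝ 2 (fun t : ℝ => (t, y₀)) := contDiff_id.prodMk contDiff_const
  set O : Set ℝ := (fun t : ℝ => (t, y₀)) ⁻¹' S with hO
  have hOopen : IsOpen O := hS.preimage hg.continuous
  have hx₀ : x₀ ∈ O := hp
  have hf2 : ContDiffOn ℝ 2 f O :=
    hreg.comp (hg.contDiffOn) (fun t ht => ht)
  constructor
  · filter_upwards [hOopen.mem_nhds hx₀] with t ht
    exact (hf2.differentiableOn (by norm_num)).differentiableAt (hOopen.mem_nhds ht)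
  · have h1 : ContDiffOn ℝ 1 (deriv f) O := hf2.deriv_of_isOpen hOopen (by norm_num)
    exact (h1.differentiableOn (by norm_num)).differentiableAt (hOopen.mem_nhds hx₀)

lemma sin_hasDerivAt (k a C : ℝ) (t : ℝ) :
    HasDerivAt (fun t => Real.sin (k * (t - a)) * C) (k * Real.cos (k * (t - a)) * C) t := by
  have h1 : HasDerivAt (fun t : ℝ => k * (t - a)) k t := by
    simpa using ((hasDerivAt_id t).sub_const a).const_mul k
  have h2 : HasDerivAt (fun t => Real.sin (k * (t - a))) (Real.cos (k * (t - a)) * k) t :=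
    by have := (Real.hasDerivAt_sin (k * (t - a))).comp t h1; exact this
  simpa [mul_comm] using h2.mul_const C

lemma cos_hasDerivAt (k a C : ℝ) (t : ℝ) :
    HasDerivAt (fun t => k * Real.cos (k * (t - a)) * C) (-(k ^ 2 * Real.sin (k * (t - a)) * C)) t := by
  have h1 : HasDerivAt (fun t : ℝ => k * (t - a)) k t := by
    simpa using ((hasDerivAt_id t).sub_const a).const_mul k
  have h2 : HasDerivAt (fun t => Real.cos (k * (t - a))) (-Real.sin (k * (t - a)) * k) t :=
    by have := (Real.hasDerivAt_cos (k * (t - a))).comp t h1; exact this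
  have h3 : HasDerivAt (fun y => k * Real.cos (k * (y - a)) * C) (k * (-Real.sin (k * (t - a)) * k) * C) t :=
    (h2.const_mul k).mul_const C
  convert h3 using 1
  ring

lemma combo_deriv2 {f : ℝ → ℝ} {x₀ : ℝ} (c₁ c₂ k a C : ℝ)
    (hf : ∀ᶠ t in 𝓝 x₀, DifferentiableAt ℝ f t)
    (hf' : DifferentiableAt ℝ (deriv f) x₀)
    (hmin : IsLocalMin (fun t => c₁ * f t + c₂ * (Real.sin (k * (t - a)) * C)) x₀) :
    0 ≤ c₁ * deriv (deriv f) x₀ - c₂ * (k ^ 2 * Real.sin (k * (x₀ - a)) * C) := by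
  set F : ℝ → ℝ := fun t => c₁ * f t + c₂ * (Real.sin (k * (t - a)) * C) with hF
  have hFdiff : ∀ᶠ t in 𝓝 x₀, DifferentiableAt ℝ F t := by
    filter_upwards [hf] with t ht
    exact (ht.const_mul c₁).add (((sin_hasDerivAt k a C t).differentiableAt).const_mul c₂)
  set G : ℝ → ℝ := fun t => c₁ * deriv f t + c₂ * (k * Real.cos (k * (t - a)) * C) with hG
  have hderivF : ∀ᶠ t in 𝓝 x₀, deriv F t = G t := by
    filter_upwards [hf] with t ht
    have : HasDerivAt F (c₁ * deriv f t + c₂ * (k * Real.cos (k * (t - a)) * C)) t :=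
      (ht.hasDerivAt.const_mul c₁).add ((sin_hasDerivAt k a C t).const_mul c₂)
    exact this.deriv
  have hGdiff : DifferentiableAt ℝ G x₀ :=
    (hf'.const_mul c₁).add (((cos_hasDerivAt k a C x₀).differentiableAt).const_mul c₂)
  have hFd2 : DifferentiableAt ℝ (deriv F) x₀ :=
    hGdiff.congr_of_eventuallyEq hderivF
  have h0 : 0 ≤ deriv (deriv F) x₀ := deriv2_nonneg_of_isLocalMin hFdiff hFd2 hmin
  have heqd : deriv (deriv F) x₀ = deriv G x₀ := Filter.EventuallyEq.deriv_eq hderivF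
  have hGval : deriv G x₀ = c₁ * deriv (deriv f) x₀ + c₂ * -(k ^ 2 * Real.sin (k * (x₀ - a)) * C) := by
    have : HasDerivAt G (c₁ * deriv (deriv f) x₀ + c₂ * -(k ^ 2 * Real.sin (k * (x₀ - a)) * C)) x₀ :=
      (hf'.hasDerivAt.const_mul c₁).add ((cos_hasDerivAt k a C x₀).const_mul c₂)
    exact this.deriv
  rw [heqd, hGval] at h0
  linarith

lemma slice_regY {u : ℝ × ℝ → ℝ} {S : Set (ℝ × ℝ)} (hS : IsOpen S)
    (hreg : ContDiffOn ℝ 2 u S) {x₀ y₀ : ℝ} (hp : (x₀, y₀) ∈ S) :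
    (∀ᶠ t in 𝓝 y₀, DifferentiableAt ℝ (fun t => u (x₀, t)) t) ∧
      DifferentiableAt ℝ (deriv (fun t => u (x₀, t))) y₀ := by
  set f : ℝ → ℝ := fun t => u (x₀, t) with hfdef
  have hg : ContDiff ℝ 2 (fun t : ℝ => ((x₀ : ℝ), t)) := contDiff_const.prodMk contDiff_id
  set O : Set ℝ := (fun t : ℝ => ((x₀ : ℝ), t)) ⁻¹' S with hO
  have hOopen : IsOpen O := hS.preimage hg.continuous
  have hy₀ : y₀ ∈ O := hp
  have hf2 : ContDiffOn ℝ 2 f O := hreg.comp (hg.contDiffOn) (fun t ht => ht)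
  constructor
  · filter_upwards [hOopen.mem_nhds hy₀] with t ht
    exact (hf2.differentiableOn (by norm_num)).differentiableAt (hOopen.mem_nhds ht)
  · have h1 : ContDiffOn ℝ 1 (deriv f) O := hf2.deriv_of_isOpen hOopen (by norm_num)
    exact (h1.differentiableOn (by norm_num)).differentiableAt (hOopen.mem_nhds hy₀)


lemma key {u : ℝ × ℝ → ℝ} {lam : ℝ}
    (hreg : ContDiffOn ℝ 2 u (Ioo (0:ℝ) π ×ˢ Ioo (0:ℝ) π))
    (heq : ∀ p ∈ Ioo (0:ℝ) π ×ˢ Ioo (0:ℝ) π, lap u p = -lam * u p)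
    {k a c₁ c₂ : ℝ} {p₀ : ℝ × ℝ} (hp₀ : p₀ ∈ Ioo (0:ℝ) π ×ˢ Ioo (0:ℝ) π)
    (hmin : IsLocalMin
      (fun p : ℝ × ℝ => c₁ * u p + c₂ * (Real.sin (k * (p.1 - a)) * Real.sin (k * (p.2 - a)))) p₀)
    (htouch : c₂ * (Real.sin (k * (p₀.1 - a)) * Real.sin (k * (p₀.2 - a))) = -(c₁ * u p₀)) :
    0 ≤ (2 * k ^ 2 - lam) * (c₁ * u p₀) := by
  obtain ⟨x₀, y₀⟩ := p₀
  have hS : IsOpen (Ioo (0:ℝ) π ×ˢ Ioo (0:ℝ) π) := isOpen_Ioo.prod isOpen_Ioo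
  obtain ⟨hev1, hd1⟩ := slice_reg hS hreg hp₀
  obtain ⟨hev2, hd2⟩ := slice_regY hS hreg hp₀
  -- x slice
  have hcx : ContinuousAt (fun t : ℝ => (t, y₀)) x₀ := (continuous_id.prodMk continuous_const).continuousAt
  have hminx : IsLocalMin
      (fun t : ℝ => c₁ * u (t, y₀) + c₂ * (Real.sin (k * (t - a)) * Real.sin (k * (y₀ - a)))) x₀ :=
    IsLocalMin.comp_continuous (g := fun t : ℝ => (t, y₀)) hmin hcx
  have hX := combo_deriv2 c₁ c₂ k a (Real.sin (k * (y₀ - a))) hev1 hd1 hminx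
  -- y slice
  have hcy : ContinuousAt (fun t : ℝ => ((x₀ : ℝ), t)) y₀ := (continuous_const.prodMk continuous_id).continuousAt
  have hminy0 : IsLocalMin
      (fun t : ℝ => c₁ * u (x₀, t) + c₂ * (Real.sin (k * (x₀ - a)) * Real.sin (k * (t - a)))) y₀ :=
    IsLocalMin.comp_continuous (g := fun t : ℝ => ((x₀ : ℝ), t)) hmin hcy
  have hminy : IsLocalMin
      (fun t : ℝ => c₁ * u (x₀, t) + c₂ * (Real.sin (k * (t - a)) * Real.sin (k * (x₀ - a)))) y₀ := by
    have : (fun t : ℝ => c₁ * u (x₀, t) + c₂ * (Real.sin (k * (x₀ - a)) * Real.sin (k * (t - a))))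
        = (fun t : ℝ => c₁ * u (x₀, t) + c₂ * (Real.sin (k * (t - a)) * Real.sin (k * (x₀ - a)))) := by
      funext t; ring
    exact this ▸ hminy0
  have hY := combo_deriv2 c₁ c₂ k a (Real.sin (k * (x₀ - a))) hev2 hd2 hminy
  have hlapX : pdX (pdX u) (x₀, y₀) = deriv (deriv (fun t => u (t, y₀))) x₀ := rfl
  have hlapY : pdY (pdY u) (x₀, y₀) = deriv (deriv (fun t => u (x₀, t))) y₀ := rfl
  have hl := heq (x₀, y₀) hp₀
  rw [lap, hlapX, hlapY] at hl
  simp only at htouch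
  have htouchk : k ^ 2 * (c₂ * (Real.sin (k * (x₀ - a)) * Real.sin (k * (y₀ - a))))
      = k ^ 2 * (-(c₁ * u (x₀, y₀))) := by rw [htouch]
  have hl' : c₁ * (deriv (deriv (fun t => u (t, y₀))) x₀ + deriv (deriv (fun t => u (x₀, t))) y₀)
      = c₁ * (-lam * u (x₀, y₀)) := by rw [hl]
  nlinarith [hX, hY, hl', htouchk]

lemma partA {u : ℝ × ℝ → ℝ} {lam : ℝ}
    (hcont : ContinuousOn u (Icc (0:ℝ) π ×ˢ Icc (0:ℝ) π))
    (hreg : ContDiffOn ℝ 2 u (Ioo (0:ℝ) π ×ˢ Ioo (0:ℝ) π))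
    (hpos : ∀ p ∈ Ioo (0:ℝ) π ×ˢ Ioo (0:ℝ) π, 0 < u p)
    (hbdry : ∀ p ∈ frontier (Icc (0:ℝ) π ×ˢ Icc (0:ℝ) π), u p = 0)
    (heq : ∀ p ∈ Ioo (0:ℝ) π ×ˢ Ioo (0:ℝ) π, lap u p = -lam * u p)
    {k : ℝ} (hk0 : 0 < k) (hk1 : k < 1) : 2 * k ^ 2 ≤ lam := by
  have hπ := Real.pi_pos
  set a : ℝ := π * (k - 1) / (2 * k) with ha
  have hav : a = π * (k - 1) / (2 * k) := rfl
  set v : ℝ × ℝ → ℝ := fun p => Real.sin (k * (p.1 - a)) * Real.sin (k * (p.2 - a)) with hv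
  set K : Set (ℝ × ℝ) := Icc (0:ℝ) π ×ˢ Icc (0:ℝ) π with hK
  have hsin : ∀ x ∈ Icc (0:ℝ) π, 0 < Real.sin (k * (x - a)) := by
    intro x hx
    apply Real.sin_pos_of_pos_of_lt_pi
    · have : a < 0 := by
        rw [hav]; apply div_neg_of_neg_of_pos <;> nlinarith
      nlinarith [hx.1]
    · have : k * (x - a) ≤ k * (π - a) := by nlinarith [hx.2]
      have h2 : k * (π - a) = π * (k + 1) / 2 := by rw [hav]; field_simp; ring
      nlinarith
  have hvpos : ∀ p ∈ K, 0 < v p := fun p hp => mul_pos (hsin _ hp.1) (hsin _ hp.2)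
  have hvc : Continuous v := by fun_prop
  have hKcomp : IsCompact K := isCompact_Icc.prod isCompact_Icc
  have hcmem : ((π/2, π/2) : ℝ × ℝ) ∈ K := by
    simp only [hK, mem_prod, mem_Icc]
    refine ⟨⟨?_, ?_⟩, ?_, ?_⟩ <;> nlinarith
  have hcmem' : ((π/2, π/2) : ℝ × ℝ) ∈ Ioo (0:ℝ) π ×ˢ Ioo (0:ℝ) π := by
    simp only [mem_prod, mem_Ioo]
    refine ⟨⟨?_, ?_⟩, ?_, ?_⟩ <;> nlinarith
  obtain ⟨p₀, hp₀K, hmax⟩ := hKcomp.exists_isMaxOn ⟨_, hcmem⟩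
    (hcont.div hvc.continuousOn (fun p hp => ne_of_gt (hvpos p hp)))
  have hcratio : 0 < u (π/2, π/2) / v (π/2, π/2) :=
    div_pos (hpos _ hcmem') (hvpos _ hcmem)
  have hratiop₀ : 0 < u p₀ / v p₀ := lt_of_lt_of_le hcratio (hmax hcmem)
  have hup₀ : 0 < u p₀ := by
    have := hvpos p₀ hp₀K
    by_contra h
    push_neg at h
    have : u p₀ / v p₀ ≤ 0 := div_nonpos_of_nonpos_of_nonneg h (le_of_lt this)
    linarith
  have hp₀ : p₀ ∈ Ioo (0:ℝ) π ×ˢ Ioo (0:ℝ) π := by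
    by_contra h
    have hfr : p₀ ∈ frontier K := by
      rw [(hKcomp.isClosed).frontier_eq]
      refine ⟨hp₀K, ?_⟩
      rw [hK, interior_prod_eq, interior_Icc]
      exact h
    have := hbdry p₀ hfr
    linarith
  set T : ℝ := u p₀ / v p₀ with hT
  have hTpos : 0 < T := hratiop₀
  have htouch : T * v p₀ = u p₀ := div_mul_cancel₀ _ (ne_of_gt (hvpos _ hp₀K))
  have hle : ∀ p ∈ K, u p ≤ T * v p := by
    intro p hp
    have h1 : u p / v p ≤ T := hmax hp
    have h2 := hvpos p hp
    calc u p = (u p / v p) * v p := (div_mul_cancel₀ _ (ne_of_gt h2)).symm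
    _ ≤ T * v p := by nlinarith
  have hmin : IsLocalMin (fun p : ℝ × ℝ =>
      (-1) * u p + T * (Real.sin (k * (p.1 - a)) * Real.sin (k * (p.2 - a)))) p₀ := by
    have hKnhds : K ∈ 𝓝 p₀ := by
      rw [mem_nhds_iff]
      exact ⟨Ioo (0:ℝ) π ×ˢ Ioo (0:ℝ) π, by rw [hK]; exact prod_mono Ioo_subset_Icc_self Ioo_subset_Icc_self,
        isOpen_Ioo.prod isOpen_Ioo, hp₀⟩
    filter_upwards [hKnhds] with p hp
    have := hle p hp
    show (-1) * u p₀ + T * v p₀ ≤ (-1) * u p + T * v p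
    linarith [htouch]
  have hkey := key hreg heq hp₀ hmin (by
    show T * (Real.sin (k * (p₀.1 - a)) * Real.sin (k * (p₀.2 - a))) = -((-1) * u p₀)
    show T * v p₀ = -((-1) * u p₀)
    linarith [htouch])
  nlinarith [hkey, hup₀]

lemma partB {u : ℝ × ℝ → ℝ} {lam : ℝ}
    (hcont : ContinuousOn u (Icc (0:ℝ) π ×ˢ Icc (0:ℝ) π))
    (hreg : ContDiffOn ℝ 2 u (Ioo (0:ℝ) π ×ˢ Ioo (0:ℝ) π))
    (hpos : ∀ p ∈ Ioo (0:ℝ) π ×ˢ Ioo (0:ℝ) π, 0 < u p)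
    (heq : ∀ p ∈ Ioo (0:ℝ) π ×ˢ Ioo (0:ℝ) π, lap u p = -lam * u p)
    {k : ℝ} (hk1 : 1 < k) : lam ≤ 2 * k ^ 2 := by
  have hπ := Real.pi_pos
  have hk0 : 0 < k := lt_trans one_pos hk1
  set a : ℝ := π * (k - 1) / (2 * k) with ha
  have ha0 : 0 < a := by
    rw [ha]; apply div_pos <;> nlinarith
  have ha2 : a < π / 2 := by
    rw [ha, div_lt_iff₀ (by positivity)]
    nlinarith
  have hka : k * (π - 2 * a) = π := by rw [ha]; field_simp; ring
  set v : ℝ × ℝ → ℝ := fun p => Real.sin (k * (p.1 - a)) * Real.sin (k * (p.2 - a)) with hv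
  set Q : Set (ℝ × ℝ) := Icc a (π - a) ×ˢ Icc a (π - a) with hQ
  have hQsub : Q ⊆ Ioo (0:ℝ) π ×ˢ Ioo (0:ℝ) π := by
    intro p hp
    obtain ⟨⟨h1, h2⟩, h3, h4⟩ := hp
    exact ⟨⟨by linarith, by linarith⟩, by linarith, by linarith⟩
  have hupos : ∀ p ∈ Q, 0 < u p := fun p hp => hpos p (hQsub hp)
  have hsinnn : ∀ x ∈ Icc a (π - a), 0 ≤ Real.sin (k * (x - a)) := by
    intro x hx
    apply Real.sin_nonneg_of_nonneg_of_le_pi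
    · nlinarith [hx.1]
    · nlinarith [hx.2]
  have hvc : Continuous v := by fun_prop
  have hQcomp : IsCompact Q := isCompact_Icc.prod isCompact_Icc
  have hcmem : ((π/2, π/2) : ℝ × ℝ) ∈ Q := by
    simp only [hQ, mem_prod, mem_Icc]
    refine ⟨⟨?_, ?_⟩, ?_, ?_⟩ <;> nlinarith
  have hvcenter : v (π/2, π/2) = 1 := by
    have : k * (π/2 - a) = π / 2 := by rw [ha]; field_simp; ring
    simp only [hv, this, Real.sin_pi_div_two, mul_one]
  obtain ⟨p₀, hp₀Q, hmax⟩ := hQcomp.exists_isMaxOn ⟨_, hcmem⟩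
    ((hvc.continuousOn).div (hcont.mono (subset_trans hQsub (prod_mono Ioo_subset_Icc_self Ioo_subset_Icc_self)))
      (fun p hp => ne_of_gt (hupos p hp)))
  have hcratio : 0 < v (π/2, π/2) / u (π/2, π/2) := by
    rw [hvcenter]
    exact div_pos one_pos (hupos _ hcmem)
  have hratiop₀ : 0 < v p₀ / u p₀ := lt_of_lt_of_le hcratio (hmax hcmem)
  have hup₀ : 0 < u p₀ := hupos _ hp₀Q
  have hvp₀ : 0 < v p₀ := by
    by_contra h
    push_neg at h
    have : v p₀ / u p₀ ≤ 0 := div_nonpos_of_nonpos_of_nonneg h (le_of_lt hup₀)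
    linarith
  -- p₀ is in the open inner square
  have hsx : 0 < Real.sin (k * (p₀.1 - a)) ∧ 0 < Real.sin (k * (p₀.2 - a)) := by
    have h1 := hsinnn _ hp₀Q.1
    have h2 := hsinnn _ hp₀Q.2
    have hvp₀' : 0 < Real.sin (k * (p₀.1 - a)) * Real.sin (k * (p₀.2 - a)) := hvp₀
    constructor <;> nlinarith [hvp₀']
  have hint : p₀ ∈ Ioo a (π - a) ×ˢ Ioo a (π - a) := by
    obtain ⟨⟨h1, h2⟩, h3, h4⟩ := hp₀Q
    refine ⟨⟨lt_of_le_of_ne h1 ?_, lt_of_le_of_ne h2 ?_⟩,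
      lt_of_le_of_ne h3 ?_, lt_of_le_of_ne h4 ?_⟩
    · intro hc
      have h5 := hsx.1
      rw [hc, sub_self, mul_zero, Real.sin_zero] at h5
      exact lt_irrefl 0 h5
    · intro hc
      have h5 := hsx.1
      have e : k * (π - a - a) = π := by linear_combination hka
      rw [hc, e, Real.sin_pi] at h5
      exact lt_irrefl 0 h5
    · intro hc
      have h5 := hsx.2
      rw [hc, sub_self, mul_zero, Real.sin_zero] at h5
      exact lt_irrefl 0 h5
    · intro hc
      have h5 := hsx.2
      have e : k * (π - a - a) = π := by linear_combination hka
      rw [hc, e, Real.sin_pi] at h5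
      exact lt_irrefl 0 h5
  have hp₀ : p₀ ∈ Ioo (0:ℝ) π ×ˢ Ioo (0:ℝ) π := hQsub hp₀Q
  set T : ℝ := v p₀ / u p₀ with hT
  have hTpos : 0 < T := hratiop₀
  have htouch : T * u p₀ = v p₀ := div_mul_cancel₀ _ (ne_of_gt hup₀)
  have hle : ∀ p ∈ Q, v p ≤ T * u p := by
    intro p hp
    have h1 : v p / u p ≤ T := hmax hp
    have h2 := hupos p hp
    calc v p = (v p / u p) * u p := (div_mul_cancel₀ _ (ne_of_gt h2)).symm
    _ ≤ T * u p := by nlinarith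
  have hmin : IsLocalMin (fun p : ℝ × ℝ =>
      T * u p + (-1) * (Real.sin (k * (p.1 - a)) * Real.sin (k * (p.2 - a)))) p₀ := by
    have hQnhds : Q ∈ 𝓝 p₀ := by
      rw [mem_nhds_iff]
      exact ⟨Ioo a (π - a) ×ˢ Ioo a (π - a),
        prod_mono Ioo_subset_Icc_self Ioo_subset_Icc_self,
        isOpen_Ioo.prod isOpen_Ioo, hint⟩
    filter_upwards [hQnhds] with p hp
    have := hle p hp
    show T * u p₀ + (-1) * v p₀ ≤ T * u p + (-1) * v p
    linarith [htouch]
  have hkey := key hreg heq hp₀ hmin (by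
    show (-1) * (Real.sin (k * (p₀.1 - a)) * Real.sin (k * (p₀.2 - a))) = -(T * u p₀)
    show (-1) * v p₀ = -(T * u p₀)
    linarith [htouch])
  nlinarith [hkey, hup₀, hTpos, mul_pos hTpos hup₀]

/-- A positive Dirichlet eigenfunction of the Euclidean Laplacian on the square
`[0,π] × [0,π]` has eigenvalue `λ = 2` (the principal Dirichlet eigenvalue). -/
theorem stmt6 (lam : ℝ) (u : ℝ × ℝ → ℝ)
    (hcont : ContinuousOn u (Icc (0:ℝ) π ×ˢ Icc (0:ℝ) π))
    (hreg : ContDiffOn ℝ 2 u (Ioo (0:ℝ) π ×ˢ Ioo (0:ℝ) π))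
    (hpos : ∀ p ∈ Ioo (0:ℝ) π ×ˢ Ioo (0:ℝ) π, 0 < u p)
    (hbdry : ∀ p ∈ frontier (Icc (0:ℝ) π ×ˢ Icc (0:ℝ) π), u p = 0)
    (heq : ∀ p ∈ Ioo (0:ℝ) π ×ˢ Ioo (0:ℝ) π, lap u p = -lam * u p) :
    lam = 2 := by
  have h1 : lam ≤ 2 := by
    by_contra h
    push_neg at h
    set k : ℝ := Real.sqrt ((lam + 2) / 4) with hk
    have hs : k ^ 2 = (lam + 2) / 4 := Real.sq_sqrt (by linarith)
    have hk1 : 1 < k := by nlinarith [Real.sqrt_nonneg ((lam + 2) / 4), hs]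
    have := partB hcont hreg hpos heq hk1
    rw [hs] at this
    linarith
  have h2 : 2 ≤ lam := by
    by_contra h
    push_neg at h
    set m : ℝ := max lam 0 with hm
    have hm0 : 0 ≤ m := le_max_right _ _
    have hml : lam ≤ m := le_max_left _ _
    have hm2 : m < 2 := max_lt h (by norm_num)
    set k : ℝ := Real.sqrt ((m + 2) / 4) with hk
    have hs : k ^ 2 = (m + 2) / 4 := Real.sq_sqrt (by linarith)
    have hk0 : 0 < k := Real.sqrt_pos.mpr (by linarith)
    have hk1 : k < 1 := by nlinarith [hs]
    have := partA hcont hreg hpos hbdry heq hk0 hk1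
    rw [hs] at this
    linarith
  linarith
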